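/- Let X be an infinite set. If (θ,θ') and (θ,θ'') are 2-atoms of Fact(X) with the same first coordinate, then (θ,θ') ≈₂ (θ,θ''), where ≈₂ is the transitive closure of the relation ∼₂ on 2-atoms defined by: (θ,θ') ∼₂ (θ,θ'') iff they have the same first coordinate and there is a factor pair (γ,γ') such that X/γ has exactly 8 elements and both (θ,θ') and (θ,θ'') lie in the interval [0,(γ,γ')] of Fact(X). -/

import Mathlib

/-- A factor pair is a pair of equivalence relations with `θ ∩ θ' = Δ` and `θ ∘ θ' = ∇`. -/
def IsFactorPair {X : Type*} (θ θ' : Setoid X) : Prop :=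
  (∀ x y : X, θ x y ∧ θ' x y ↔ x = y) ∧
  ∀ x y : X, Relation.Comp (⇑θ) (⇑θ') x y

/-- `Fact X`, the set of factor pairs of `X`. -/
def FactPair (X : Type*) : Type _ :=
  {p : Setoid X × Setoid X // IsFactorPair p.1 p.2}

/-- The order on `Fact X`: `(θ,θ') ≤ (φ,φ')` iff `φ ⊆ θ`, `θ' ⊆ φ'` and `φ∘θ' = θ'∘φ`. -/
def FactLE {X : Type*} (p q : FactPair X) : Prop :=
  q.1.1 ≤ p.1.1 ∧ p.1.2 ≤ q.1.2 ∧
    Relation.Comp (⇑q.1.1) (⇑p.1.2) = Relation.Comp (⇑p.1.2) (⇑q.1.1)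

def FactLT {X : Type*} (p q : FactPair X) : Prop :=
  FactLE p q ∧ p ≠ q

/-- The orthocomplementation `(θ,θ')^⊥ = (θ',θ)` on `Fact X`. -/
def FactPerp {X : Type*} (p : FactPair X) : FactPair X :=
  ⟨(p.1.2, p.1.1), by
    obtain ⟨h1, h2⟩ := p.2
    refine ⟨fun x y => ⟨fun h => (h1 x y).1 ⟨h.2, h.1⟩, ?_⟩, fun x y => ?_⟩
    · rintro rfl
      exact ⟨p.1.2.refl' x, p.1.1.refl' x⟩
    · obtain ⟨z, hz1, hz2⟩ := h2 y x
      exact ⟨z, p.1.2.symm' hz2, p.1.1.symm' hz1⟩⟩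

/-- `0 = (∇,Δ)` in `Fact X`. -/
def FactZero (X : Type*) : FactPair X :=
  ⟨(⊤, ⊥), by
    refine ⟨fun x y => ⟨fun h => ?_, ?_⟩, fun x y => ⟨y, ?_, ?_⟩⟩
    · simpa [Setoid.bot_def] using h.2
    · rintro rfl
      exact ⟨(⊤ : Setoid X).refl' x, (⊥ : Setoid X).refl' x⟩
    · simp [Setoid.top_def]
    · simp [Setoid.bot_def]⟩

/-- `1 = (Δ,∇)` in `Fact X`. -/
def FactOne (X : Type*) : FactPair X :=
  ⟨(⊥, ⊤), by
    refine ⟨fun x y => ⟨fun h => ?_, ?_⟩, fun x y => ⟨x, ?_, ?_⟩⟩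
    · simpa [Setoid.bot_def] using h.1
    · rintro rfl
      exact ⟨(⊥ : Setoid X).refl' x, (⊤ : Setoid X).refl' x⟩
    · simp [Setoid.bot_def]
    · simp [Setoid.top_def]⟩

/-- An atom of `Fact X`. -/
def IsFactAtom {X : Type*} (a : FactPair X) : Prop :=
  FactLT (FactZero X) a ∧ ∀ x : FactPair X, FactLT (FactZero X) x → ¬ FactLT x a

/-- An `n`-relation: every equivalence class has exactly `n` elements. -/
def IsNRel {X : Type*} (n : ℕ) (θ : Setoid X) : Prop :=
  ∀ x : X, Nat.card {y // θ x y} = n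

/-- A `p`-atom: an atom `(φ,φ')` such that `φ'` is a `p`-relation. -/
def IsPAtom {X : Type*} (p : ℕ) (a : FactPair X) : Prop :=
  IsFactAtom a ∧ IsNRel p a.1.2

/-- The image `σ(θ) = {(σ x, σ y) : (x,y) ∈ θ}` of an equivalence relation under a
permutation. -/
def permSetoid {X : Type*} (σ : Equiv.Perm X) (θ : Setoid X) : Setoid X :=
  ⟨fun a b => θ (σ.symm a) (σ.symm b),
    ⟨fun a => θ.refl' _, fun h => θ.symm' h, fun h1 h2 => θ.trans' h1 h2⟩⟩

/-- The action `Γ(σ)(θ,θ') = (σ(θ),σ(θ'))` of a permutation on factor pairs. -/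
def permFactPair {X : Type*} (σ : Equiv.Perm X) (t : FactPair X) : FactPair X :=
  ⟨(permSetoid σ t.1.1, permSetoid σ t.1.2), by
    obtain ⟨h1, h2⟩ := t.2
    refine ⟨fun x y => ⟨fun h => ?_, ?_⟩, fun x y => ?_⟩
    · exact σ.symm.injective ((h1 (σ.symm x) (σ.symm y)).1 ⟨h.1, h.2⟩)
    · rintro rfl
      exact ⟨t.1.1.refl' _, t.1.2.refl' _⟩
    · obtain ⟨w, hw1, hw2⟩ := h2 (σ.symm x) (σ.symm y)
      refine ⟨σ w, ?_, ?_⟩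
      · show t.1.1 (σ.symm x) (σ.symm (σ w))
        simpa using hw1
      · show t.1.2 (σ.symm (σ w)) (σ.symm y)
        simpa using hw2⟩

/-- An automorphism of `Fact X`: a bijection preserving `≤` in both directions and
commuting with `⊥`. -/
def IsFactAut {X : Type*} (α : FactPair X → FactPair X) : Prop :=
  Function.Bijective α ∧
  (∀ p q : FactPair X, FactLE p q ↔ FactLE (α p) (α q)) ∧
  ∀ p : FactPair X, α (FactPerp p) = FactPerp (α p)

/-- `Eq*(X)`: the equivalence relations on `X` that are `n`-relations for some `n ≥ 1`. -/
def EqStar (X : Type*) : Type _ :=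
  {θ : Setoid X // ∃ n : ℕ, 0 < n ∧ IsNRel n θ}

/-- A regular equivalence relation: any two classes are equinumerous. -/
def IsRegularRel {X : Type*} (θ : Setoid X) : Prop :=
  ∀ x y : X, Nonempty ({z // θ x z} ≃ {z // θ y z})

/-- The action of a permutation on `Eq*(X)`. -/
def permEqStar {X : Type*} (σ : Equiv.Perm X) (θ : EqStar X) : EqStar X :=
  ⟨permSetoid σ θ.1, by
    obtain ⟨n, hn, hrel⟩ := θ.2
    refine ⟨n, hn, fun x => ?_⟩
    have e : {y // (permSetoid σ θ.1) x y} ≃ {y // θ.1 (σ.symm x) y} :=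
      σ.symm.subtypeEquiv fun y => Iff.rfl
    rw [Nat.card_congr e]
    exact hrel (σ.symm x)⟩

/-- A `2`-atom of `Fact X`. -/
def Is2Atom {X : Type*} (a : FactPair X) : Prop :=
  IsFactAtom a ∧ IsNRel 2 a.1.2

/-- The relation `∼₂` on `2`-atoms: same first coordinate, and both lie in an interval
`[0,(γ,γ')]` where `X/γ` has exactly `8` elements. -/
def Sim2 {X : Type*} (a b : FactPair X) : Prop :=
  Is2Atom a ∧ Is2Atom b ∧ a.1.1 = b.1.1 ∧
    ∃ g : FactPair X, Nat.card (Quotient g.1.1) = 8 ∧ FactLE a g ∧ FactLE b g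



universe u

open Equiv

namespace TwoAtomsAux

/-- A permutation is *pattern-formed* if, in suitable coordinates `Y ≃ Fin 4 × W`,
it acts by a fixed permutation of the labels `Fin 4` and fixes the `W`-coordinate. -/
def PatternFormed {Y : Type u} (σ : Equiv.Perm Y) : Prop :=
  ∃ (W : Type u) (m : Y ≃ (Fin 4) × W) (π : Equiv.Perm (Fin 4)),
    ∀ y, m (σ y) = (π (m y).1, (m y).2)

lemma PatternFormed.of_data {Y : Type u} (σ : Equiv.Perm Y) {L : Type*} {W : Type u}
    (m₀ : Y ≃ L × W) (eL : L ≃ Fin 4) (π₀ : Equiv.Perm L)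
    (h : ∀ y, m₀ (σ y) = (π₀ (m₀ y).1, (m₀ y).2)) : PatternFormed σ := by
  refine ⟨W, m₀.trans (eL.prodCongr (Equiv.refl W)), eL.permCongr π₀, fun y => ?_⟩
  simp [h y, Equiv.permCongr_apply]

lemma PatternFormed.conj {Y Z : Type u} {σ : Equiv.Perm Z} (q : Y ≃ Z)
    (h : PatternFormed σ) : PatternFormed (q.symm.permCongr σ) := by
  obtain ⟨W, m, π, hm⟩ := h
  exact ⟨W, q.trans m, π, fun y => by simp [Equiv.permCongr_apply, hm]⟩

/-- boolean negation as an equivalence -/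
def bnot : Equiv.Perm Bool := ⟨Bool.not, Bool.not, Bool.not_not, Bool.not_not⟩

/-- flip on the `Bool` coordinate -/
def flipP (A : Type u) : Equiv.Perm (Bool × A) := bnot.prodCongr (Equiv.refl A)

@[simp] lemma flipP_apply {A : Type u} (b : Bool) (a : A) : flipP A (b, a) = (!b, a) := rfl

/-- Any fixed-point-free involution gives a `Bool × M` coordinate system. -/
lemma pairing_equiv {Z : Type u} (g : Z → Z) (hinv : Function.Involutive g)
    (hfpf : ∀ z, g z ≠ z) :
    ∃ (M : Type u) (e : Z ≃ Bool × M), ∀ z, e (g z) = (!(e z).1, (e z).2) := by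
  classical
  let S : Setoid Z := ⟨fun a b => b = a ∨ b = g a, by
    constructor
    · exact fun a => Or.inl rfl
    · rintro a b (rfl | rfl)
      · exact Or.inl rfl
      · exact Or.inr (hinv a).symm
    · rintro a b c (rfl | rfl) (rfl | rfl)
      · exact Or.inl rfl
      · exact Or.inr rfl
      · exact Or.inr rfl
      · exact Or.inl (hinv a)⟩
  have hmkg : ∀ z : Z, Quotient.mk S (g z) = Quotient.mk S z :=
    fun z => Quotient.sound (Or.inr (hinv z).symm)
  have key : ∀ z : Z, (Quotient.mk S z).out = z ∨ (Quotient.mk S z).out = g z := by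
    intro z
    have h : S (Quotient.mk S z).out z := Quotient.mk_out (s := S) z
    rcases h with h | h
    · exact Or.inl h.symm
    · refine Or.inr ?_
      calc (Quotient.mk S z).out = g (g (Quotient.mk S z).out) := (hinv _).symm
        _ = g z := by rw [← h]
  let b : Z → Bool := fun z => decide ((Quotient.mk S z).out = z)
  have hbg : ∀ z, b (g z) = ! b z := by
    intro z
    rcases key z with h | h
    · have h1 : b z = true := by simp [b, h]
      have h2 : (Quotient.mk S (g z)).out ≠ g z := by
        rw [hmkg z, h]; exact fun hc => hfpf z hc.symm
      simp [b, h1, h2, h]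
    · have h1 : b z = false := by
        have : (Quotient.mk S z).out ≠ z := by rw [h]; exact hfpf z
        simp [b, this]
      have h2 : (Quotient.mk S (g z)).out = g z := by rw [hmkg z, h]
      simp [b, h1, h2, h, hfpf z]
  let f : Z → Bool × Quotient S := fun z => (b z, Quotient.mk S z)
  have hbij : Function.Bijective f := by
    constructor
    · intro a a' hab
      have h2 : Quotient.mk S a = Quotient.mk S a' := congrArg Prod.snd hab
      have h1 : b a = b a' := congrArg Prod.fst hab
      rcases (Quotient.exact h2 : S a a') with h | h
      · exact h.symm
      · subst h
        rw [hbg a] at h1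
        exact absurd h1 (by simp)
    · rintro ⟨bb, c⟩
      have hc : Quotient.mk S c.out = c := c.out_eq
      have hbt : b c.out = true := by simp [b, hc]
      cases bb
      · refine ⟨g c.out, ?_⟩
        simp only [f, hbg, hbt, hmkg, hc]
        rfl
      · exact ⟨c.out, by simp only [f, hbt, hc]⟩
  exact ⟨Quotient S, Equiv.ofBijective f hbij, fun z => by
    simp only [Equiv.ofBijective_apply]
    exact Prod.ext (hbg z) (hmkg z)⟩


/-! ### model pattern lemma -/

lemma flipP_apply' {A : Type u} (p : Bool × A) : flipP A p = (!p.1, p.2) := by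
  cases p; rfl

/-- the flip on the left summand of `(Bool × A) ⊕ R` is pattern-formed whenever
`R ≃ Bool × A`. -/
lemma flip_sum_pattern {A R : Type u} (e : R ≃ Bool × A) :
    PatternFormed (Equiv.sumCongr (flipP A) (Equiv.refl R)) := by
  refine PatternFormed.of_data _
    ((Equiv.sumCongr (Equiv.refl (Bool × A)) e).trans (Equiv.sumProdDistrib Bool Bool A).symm)
    ((Equiv.sumCongr finTwoEquiv.symm finTwoEquiv.symm).trans
      (finSumFinEquiv.trans (finCongr (show 2+2=4 by norm_num))))
    (Equiv.sumCongr bnot (Equiv.refl Bool)) ?_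
  rintro (⟨b, a⟩ | r)
  · rfl
  · simp only [Equiv.trans_apply, Equiv.sumCongr_apply, Sum.map_inr, Equiv.refl_apply]
    rcases e r with ⟨b, a⟩
    rfl

/-! ### nonconstructive equivalences -/

lemma sum_self_equiv (A : Type u) [Infinite A] : Nonempty (A ⊕ A ≃ A) := by
  rw [← Cardinal.eq]
  simp only [Cardinal.mk_sum, Cardinal.lift_id]
  exact Cardinal.add_eq_self (Cardinal.infinite_iff.mp ‹_›)

lemma sum_absorb {A B : Type u} [Infinite A] (e : B ↪ A) : Nonempty (A ⊕ B ≃ A) := by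
  rw [← Cardinal.eq]
  simp only [Cardinal.mk_sum, Cardinal.lift_id]
  exact Cardinal.add_eq_left (Cardinal.infinite_iff.mp ‹_›) ((Cardinal.le_def _ _).mpr ⟨e⟩)

/-! ### splitting an involution into two pattern-formed factors -/

lemma split_of_model {Y Z' : Type u} (u : Equiv.Perm Y) (Q : Y ≃ Z') (s' t' : Equiv.Perm Z')
    (hs : PatternFormed s') (ht : PatternFormed t')
    (hq : ∀ y, Q (u y) = s' (t' (Q y))) :
    ∃ s t : Equiv.Perm Y, PatternFormed s ∧ PatternFormed t ∧ u = s * t := by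
  refine ⟨Q.symm.permCongr s', Q.symm.permCongr t', hs.conj Q, ht.conj Q,
    Equiv.ext fun y => ?_⟩
  simp only [Equiv.Perm.mul_apply, Equiv.permCongr_apply, Equiv.symm_symm,
    Equiv.apply_symm_apply]
  rw [← hq, Equiv.symm_apply_apply]


/-- swap the first two summands of a three-fold sum -/
def swapSum (A B C : Type u) : (A ⊕ (B ⊕ C)) ≃ (B ⊕ (A ⊕ C)) where
  toFun z := match z with
    | Sum.inl a => Sum.inr (Sum.inl a)
    | Sum.inr (Sum.inl b) => Sum.inl b
    | Sum.inr (Sum.inr c) => Sum.inr (Sum.inr c)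
  invFun z := match z with
    | Sum.inl b => Sum.inr (Sum.inl b)
    | Sum.inr (Sum.inl a) => Sum.inl a
    | Sum.inr (Sum.inr c) => Sum.inr (Sum.inr c)
  left_inv := by rintro (a | (b | c)) <;> rfl
  right_inv := by rintro (b | (a | c)) <;> rfl

/-- regroup `(Bool×M) ⊕ ((Bool×F) ⊕ (Bool×F))` as `(Bool×(M⊕F)) ⊕ (Bool×F)`,
merging the first two summands. -/
def groupSum (M F : Type u) :
    ((Bool × M) ⊕ ((Bool × F) ⊕ (Bool × F))) ≃ ((Bool × (M ⊕ F)) ⊕ (Bool × F)) where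
  toFun z := match z with
    | Sum.inl (b, m) => Sum.inl (b, Sum.inl m)
    | Sum.inr (Sum.inl (b, f)) => Sum.inl (b, Sum.inr f)
    | Sum.inr (Sum.inr p) => Sum.inr p
  invFun z := match z with
    | Sum.inl (b, Sum.inl m) => Sum.inl (b, m)
    | Sum.inl (b, Sum.inr f) => Sum.inr (Sum.inl (b, f))
    | Sum.inr p => Sum.inr (Sum.inr p)
  left_inv := by rintro (⟨b, m⟩ | (⟨b, f⟩ | p)) <;> rfl
  right_inv := by rintro (⟨b, m | f⟩ | p) <;> rfl

lemma modelsplit_B {M F : Type u} [Infinite F] (emb : (Bool × M) ↪ F) :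
    ∃ s t : Equiv.Perm ((Bool × M) ⊕ F), PatternFormed s ∧ PatternFormed t ∧
      ∀ z, (Equiv.sumCongr (flipP M) (Equiv.refl F)) z = s (t z) := by
  obtain ⟨e2⟩ := sum_self_equiv F
  let ebf : Bool × F ≃ F := (Equiv.boolProdEquivSum F).trans e2
  let eF : F ≃ (Bool × F) ⊕ (Bool × F) :=
    e2.symm.trans (Equiv.sumCongr ebf.symm ebf.symm)
  let Q1 : ((Bool × M) ⊕ F) ≃ ((Bool × M) ⊕ ((Bool × F) ⊕ (Bool × F))) :=
    (Equiv.refl _).sumCongr eF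
  let s' : Equiv.Perm ((Bool × M) ⊕ ((Bool × F) ⊕ (Bool × F))) :=
    Equiv.sumCongr (flipP M) (Equiv.sumCongr (flipP F) (Equiv.refl (Bool × F)))
  let t' : Equiv.Perm ((Bool × M) ⊕ ((Bool × F) ⊕ (Bool × F))) :=
    Equiv.sumCongr (Equiv.refl (Bool × M)) (Equiv.sumCongr (flipP F) (Equiv.refl (Bool × F)))
  have hQ1 : ∀ z, Q1 ((Equiv.sumCongr (flipP M) (Equiv.refl F)) z) = s' (t' (Q1 z)) := by
    rintro (⟨b, m⟩ | x)
    · rfl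
    · have h0 : Q1 (Sum.inr x) = Sum.inr (eF x) := rfl
      have h1 : (Equiv.sumCongr (flipP M) (Equiv.refl F)) (Sum.inr x) = Sum.inr x := rfl
      rw [h1, h0]
      rcases h' : eF x with ⟨b, f⟩ | ⟨b, f⟩ <;>
        simp [s', t', flipP_apply', h']
  have embBF : (Bool × M) ↪ (Bool × F) :=
    emb.trans ⟨fun f => (true, f), fun a b hab => (Prod.ext_iff.mp hab).2⟩
  obtain ⟨eAb0⟩ := sum_absorb (A := Bool × F) (B := Bool × M) embBF
  have eAb : ((Bool × M) ⊕ (Bool × F)) ≃ (Bool × F) := (Equiv.sumComm _ _).trans eAb0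
  have hps : PatternFormed s' := by
    have h1 : PatternFormed (Equiv.sumCongr (flipP (M ⊕ F)) (Equiv.refl (Bool × F))) :=
      flip_sum_pattern (eAb.symm.trans (Equiv.prodSumDistrib Bool M F).symm)
    have h2 : (groupSum M F).symm.permCongr
        (Equiv.sumCongr (flipP (M ⊕ F)) (Equiv.refl (Bool × F))) = s' := by
      apply Equiv.ext
      rintro (⟨b, m⟩ | (⟨b, f⟩ | ⟨b, f⟩)) <;> rfl
    rw [← h2]; exact h1.conj (groupSum M F)
  have hpt : PatternFormed t' := by
    have h1 : PatternFormed
        (Equiv.sumCongr (flipP F) (Equiv.refl ((Bool × M) ⊕ (Bool × F)))) :=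
      flip_sum_pattern eAb
    have h2 : (swapSum (Bool × M) (Bool × F) (Bool × F)).symm.permCongr
        (Equiv.sumCongr (flipP F) (Equiv.refl ((Bool × M) ⊕ (Bool × F)))) = t' := by
      apply Equiv.ext
      rintro (⟨b, m⟩ | (⟨b, f⟩ | ⟨b, f⟩)) <;> rfl
    rw [← h2]; exact h1.conj (swapSum (Bool × M) (Bool × F) (Bool × F))
  refine ⟨Q1.symm.permCongr s', Q1.symm.permCongr t', hps.conj Q1, hpt.conj Q1, fun z => ?_⟩
  simp only [Equiv.permCongr_apply, Equiv.symm_symm, Equiv.apply_symm_apply]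
  rw [← hQ1, Equiv.symm_apply_apply]

lemma modelsplit_A {M F : Type u} [Infinite M] (emb : F ↪ (Bool × M)) :
    ∃ s t : Equiv.Perm ((Bool × M) ⊕ F), PatternFormed s ∧ PatternFormed t ∧
      ∀ z, (Equiv.sumCongr (flipP M) (Equiv.refl F)) z = s (t z) := by
  obtain ⟨e2⟩ := sum_self_equiv M
  obtain ⟨eR⟩ := sum_absorb (A := Bool × M) (B := F) emb
  let d : (Bool × M) ≃ (Bool × M) ⊕ (Bool × M) :=
    ((Equiv.refl Bool).prodCongr e2.symm).trans (Equiv.prodSumDistrib Bool M M)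
  let Q1 : ((Bool × M) ⊕ F) ≃ ((Bool × M) ⊕ ((Bool × M) ⊕ F)) :=
    (d.sumCongr (Equiv.refl F)).trans (Equiv.sumAssoc _ _ _)
  let s' : Equiv.Perm ((Bool × M) ⊕ ((Bool × M) ⊕ F)) :=
    Equiv.sumCongr (flipP M) (Equiv.refl _)
  let t' : Equiv.Perm ((Bool × M) ⊕ ((Bool × M) ⊕ F)) :=
    Equiv.sumCongr (Equiv.refl (Bool × M)) (Equiv.sumCongr (flipP M) (Equiv.refl F))
  have hQ1 : ∀ z, Q1 ((Equiv.sumCongr (flipP M) (Equiv.refl F)) z) = s' (t' (Q1 z)) := by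
    rintro (⟨b, m⟩ | x)
    · have h1 : (Equiv.sumCongr (flipP M) (Equiv.refl F)) (Sum.inl (b, m)) =
        Sum.inl (!b, m) := rfl
      rw [h1]
      have h2 : ∀ (c : Bool), Q1 (Sum.inl (c, m)) =
          (Equiv.sumAssoc (Bool × M) (Bool × M) F)
            (Sum.inl ((Equiv.prodSumDistrib Bool M M) (c, e2.symm m))) := fun c => rfl
      rw [h2, h2]
      rcases h' : e2.symm m with m' | m' <;>
        simp [s', t', flipP_apply', h']
    · rfl
  have hps : PatternFormed s' := flip_sum_pattern eR
  have hpt : PatternFormed t' := by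
    have h1 : PatternFormed
        (Equiv.sumCongr (flipP M) (Equiv.refl ((Bool × M) ⊕ F))) :=
      flip_sum_pattern eR
    have h2 : (swapSum (Bool × M) (Bool × M) F).symm.permCongr
        (Equiv.sumCongr (flipP M) (Equiv.refl ((Bool × M) ⊕ F))) = t' := by
      apply Equiv.ext
      rintro (⟨b, m⟩ | (⟨b, m⟩ | x)) <;> rfl
    rw [← h2]; exact h1.conj (swapSum (Bool × M) (Bool × M) F)
  refine ⟨Q1.symm.permCongr s', Q1.symm.permCongr t', hps.conj Q1, hpt.conj Q1, fun z => ?_⟩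
  simp only [Equiv.permCongr_apply, Equiv.symm_symm, Equiv.apply_symm_apply]
  rw [← hQ1, Equiv.symm_apply_apply]

lemma invsplit {Y : Type u} [Infinite Y] (u : Equiv.Perm Y) (hu : ∀ y, u (u y) = y) :
    ∃ s t : Equiv.Perm Y, PatternFormed s ∧ PatternFormed t ∧ u = s * t := by
  classical
  set pred : Y → Prop := fun y => u y ≠ y with hpred
  let F := {y // ¬ pred y}
  let Sp := {y // pred y}
  let g : Sp → Sp := fun z => ⟨u z, by
    simp only [pred, hpred, hu, ne_eq, not_not]
    exact fun hc => z.2 hc.symm⟩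
  obtain ⟨M, eS, heS⟩ := pairing_equiv g
    (fun z => Subtype.ext (hu z)) (fun z hc => z.2 (congrArg Subtype.val hc))
  let f0 : Y → (Bool × M) ⊕ F := fun y =>
    if h : pred y then Sum.inl (eS ⟨y, h⟩) else Sum.inr ⟨y, h⟩
  have hf0bij : Function.Bijective f0 := by
    constructor
    · intro a b hab
      simp only [f0] at hab
      by_cases ha : pred a <;> by_cases hb : pred b
      · rw [dif_pos ha, dif_pos hb] at hab
        exact congrArg Subtype.val (eS.injective (Sum.inl.inj hab))
      · rw [dif_pos ha, dif_neg hb] at hab; exact absurd hab (by simp)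
      · rw [dif_neg ha, dif_pos hb] at hab; exact absurd hab (by simp)
      · rw [dif_neg ha, dif_neg hb] at hab
        exact congrArg Subtype.val (Sum.inr.inj hab)
    · rintro (p | ⟨y, hy⟩)
      · refine ⟨(eS.symm p).1, ?_⟩
        have h : pred ((eS.symm p).1 : Y) := (eS.symm p).2
        simp only [f0, dif_pos h]
        congr 1
        rw [show (⟨(eS.symm p).1, h⟩ : Sp) = eS.symm p from Subtype.ext rfl]
        exact eS.apply_symm_apply p
      · exact ⟨y, by simp only [f0, dif_neg hy]⟩
  let Q0 : Y ≃ (Bool × M) ⊕ F := Equiv.ofBijective f0 hf0bij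
  have hQ0 : ∀ y, Q0 (u y) = (Equiv.sumCongr (flipP M) (Equiv.refl F)) (Q0 y) := by
    intro y
    by_cases h : pred y
    · have h' : pred (u y) := by
        simp only [pred, hpred, hu, ne_eq, not_not]
        exact fun hc => h hc.symm
      have hg : (⟨u y, h'⟩ : Sp) = g ⟨y, h⟩ := rfl
      show f0 (u y) = _
      rw [show Q0 y = f0 y from rfl]
      simp only [f0, dif_pos h, dif_pos h', hg, heS,
        Equiv.sumCongr_apply, Sum.map_inl, flipP_apply']
    · have h' : u y = y := not_not.mp h
      show f0 (u y) = _
      rw [show Q0 y = f0 y from rfl]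
      simp only [f0, h', dif_neg h, Equiv.sumCongr_apply, Sum.map_inr, Equiv.refl_apply]
  haveI : Infinite ((Bool × M) ⊕ F) := Infinite.of_injective (⇑Q0) Q0.injective
  have main : ∃ s t : Equiv.Perm ((Bool × M) ⊕ F), PatternFormed s ∧ PatternFormed t ∧
      ∀ z, (Equiv.sumCongr (flipP M) (Equiv.refl F)) z = s (t z) := by
    rcases Function.Embedding.total (Bool × M) F with hemb | hemb
    · obtain ⟨emb⟩ := hemb
      haveI : Infinite F := by
        rcases finite_or_infinite F with hF | hF
        · haveI := hF
          haveI : Finite (Bool × M) := Finite.of_injective emb emb.injective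
          exact (not_finite ((Bool × M) ⊕ F)).elim
        · exact hF
      exact modelsplit_B emb
    · obtain ⟨emb⟩ := hemb
      haveI : Infinite M := by
        rcases finite_or_infinite M with hM | hM
        · haveI := hM
          haveI : Finite F := Finite.of_injective emb emb.injective
          exact (not_finite ((Bool × M) ⊕ F)).elim
        · exact hM
      exact modelsplit_A emb
  obtain ⟨s', t', hs, ht, hst⟩ := main
  exact split_of_model u Q0 s' t' hs ht (fun y => by rw [hQ0, hst])

/-! ### every permutation is a product of two involutions -/

lemma reversal {Y : Type u} (β : Equiv.Perm Y) :
    ∃ i v : Equiv.Perm Y, (∀ y, i (i y) = y) ∧ (∀ y, v (v y) = y) ∧ β = i * v := by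
  classical
  let S : Setoid Y := ⟨β.SameCycle, ⟨fun x => Equiv.Perm.SameCycle.refl β x,
    Equiv.Perm.SameCycle.symm, Equiv.Perm.SameCycle.trans⟩⟩
  let rep : Y → Y := fun y => (Quotient.mk S y).out
  have hrep : ∀ y, β.SameCycle (rep y) y := fun y => Quotient.mk_out (s := S) y
  have hconst : ∀ {a b : Y}, β.SameCycle a b → rep a = rep b := by
    intro a b hab
    show (Quotient.mk S a).out = (Quotient.mk S b).out
    rw [Quotient.sound (hab : S a b)]
  have hex : ∀ y, ∃ k : ℤ, (β ^ k) (rep y) = y := fun y => hrep y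
  choose e he using hex
  have wd : ∀ (r : Y) (j j' : ℤ), (β ^ j) r = (β ^ j') r → ∀ c : ℤ,
      (β ^ (c - j)) r = (β ^ (c - j')) r := by
    intro r j j' h c
    have hd : (β ^ (j' - j)) r = r := by
      have h0 := congrArg (⇑(β ^ (-j))) h
      rw [← Equiv.Perm.mul_apply, ← Equiv.Perm.mul_apply, ← zpow_add, ← zpow_add,
        neg_add_cancel] at h0
      rw [sub_eq_neg_add, ← h0]
      simp
    calc (β ^ (c - j)) r = (β ^ (c - j')) ((β ^ (j' - j)) r) := by
          rw [← Equiv.Perm.mul_apply, ← zpow_add]; ring_nf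
        _ = (β ^ (c - j')) r := by rw [hd]
  let if0 : Y → Y := fun y => (β ^ (1 - e y)) (rep y)
  let vf0 : Y → Y := fun y => (β ^ (-(e y))) (rep y)
  have hreprep : ∀ y, rep (rep y) = rep y := fun y => hconst (hrep y)
  have hrep_i : ∀ y, rep (if0 y) = rep y := fun y =>
    (hconst ⟨-(1 - e y), by simp [if0, ← Equiv.Perm.mul_apply, ← zpow_add]⟩).trans (hreprep y)
  have hrep_v : ∀ y, rep (vf0 y) = rep y := fun y =>
    (hconst ⟨e y, by
      show (β ^ e y) ((β ^ (-(e y))) (rep y)) = rep y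
      rw [← Equiv.Perm.mul_apply, ← zpow_add, add_neg_cancel, zpow_zero, Equiv.Perm.one_apply]⟩).trans (hreprep y)
  have hv : ∀ y, vf0 (vf0 y) = y := by
    intro y
    have h1 : (β ^ (e (vf0 y))) (rep y) = (β ^ (-(e y))) (rep y) := by
      have := he (vf0 y)
      rwa [hrep_v] at this
    have h2 := wd (rep y) (e (vf0 y)) (-(e y)) h1 0
    simp only [zero_sub, neg_neg] at h2
    show (β ^ (-(e (vf0 y)))) (rep (vf0 y)) = y
    rw [hrep_v, h2, he]
  have hi : ∀ y, if0 (if0 y) = y := by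
    intro y
    have h1 : (β ^ (e (if0 y))) (rep y) = (β ^ (1 - e y)) (rep y) := by
      have := he (if0 y)
      rwa [hrep_i] at this
    have h2 := wd (rep y) (e (if0 y)) (1 - e y) h1 1
    show (β ^ (1 - e (if0 y))) (rep (if0 y)) = y
    rw [hrep_i, h2]
    simp only [sub_sub_cancel, he]
  have hprod : ∀ y, if0 (vf0 y) = β y := by
    intro y
    have h1 : (β ^ (e (vf0 y))) (rep y) = (β ^ (-(e y))) (rep y) := by
      have := he (vf0 y)
      rwa [hrep_v] at this
    have h2 := wd (rep y) (e (vf0 y)) (-(e y)) h1 1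
    show (β ^ (1 - e (vf0 y))) (rep (vf0 y)) = β y
    rw [hrep_v, h2]
    have : (1 : ℤ) - -(e y) = 1 + e y := by ring
    rw [this, zpow_add, Equiv.Perm.mul_apply, he, zpow_one]
  refine ⟨Function.Involutive.toPerm if0 hi, Function.Involutive.toPerm vf0 hv,
    hi, hv, Equiv.ext fun y => ?_⟩
  exact (hprod y).symm

/-! ### every permutation of an infinite type is a product of four
pattern-formed permutations -/

theorem factor_four {Y : Type u} [Infinite Y] (β : Equiv.Perm Y) :
    ∃ s₁ s₂ s₃ s₄ : Equiv.Perm Y, PatternFormed s₁ ∧ PatternFormed s₂ ∧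
      PatternFormed s₃ ∧ PatternFormed s₄ ∧ β = s₁ * s₂ * s₃ * s₄ := by
  obtain ⟨i, v, hi, hv, hb⟩ := reversal β
  obtain ⟨s₁, s₂, h1, h2, hi2⟩ := invsplit i hi
  obtain ⟨s₃, s₄, h3, h4, hv2⟩ := invsplit v hv
  exact ⟨s₁, s₂, s₃, s₄, h1, h2, h3, h4, by rw [hb, hi2, hv2]; group⟩

/-! ### two-atoms from matchings -/

variable {X : Type u}

/-- the "pair" equivalence relation of an involution: classes `{x, k x}`. -/
def pairS (k : X → X) (hk : Function.Involutive k) : Setoid X :=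
  ⟨fun a b => b = a ∨ b = k a, by
    constructor
    · exact fun a => Or.inl rfl
    · rintro a b (rfl | rfl)
      · exact Or.inl rfl
      · exact Or.inr (hk a).symm
    · rintro a b c (rfl | rfl) (rfl | rfl)
      · exact Or.inl rfl
      · exact Or.inr rfl
      · exact Or.inr rfl
      · exact Or.inl (hk a)⟩

lemma pairS_apply {k : X → X} {hk : Function.Involutive k} {a b : X} :
    pairS k hk a b ↔ (b = a ∨ b = k a) := Iff.rfl

lemma kx_ne {θ : Setoid X} {k : X → X} (hn : ∀ x, ¬ θ x (k x)) (x : X) : k x ≠ x :=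
  fun h => hn x (by rw [h])

/-- the factor pair `(θ, pairS k)` determined by a matching `k`. -/
def mk2 (θ : Setoid X) (k : X → X) (hk : Function.Involutive k)
    (hn : ∀ x, ¬ θ x (k x)) (hdi : ∀ x y, θ x y ∨ θ x (k y)) : FactPair X :=
  ⟨(θ, pairS k hk), by
    constructor
    · intro x y
      constructor
      · rintro ⟨h1, rfl | rfl⟩
        · rfl
        · exact absurd h1 (hn x)
      · rintro rfl
        exact ⟨θ.refl' x, Or.inl rfl⟩
    · intro x y
      rcases hdi x y with h | h
      · exact ⟨y, h, Or.inl rfl⟩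
      · exact ⟨k y, h, Or.inr (hk y).symm⟩⟩

lemma factLE_zero (x : FactPair X) : FactLE (FactZero X) x := by
  refine ⟨le_top, bot_le, ?_⟩
  funext a b
  apply propext
  constructor
  · rintro ⟨c, h1, h2⟩
    have hcb : c = b := by
      have h2' : (⊥ : Setoid X) c b := h2
      simpa [Setoid.bot_def] using h2'
    exact ⟨a, (⊥ : Setoid X).refl' a, hcb ▸ h1⟩
  · rintro ⟨c, h1, h2⟩
    have hac : a = c := by
      have h1' : (⊥ : Setoid X) a c := h1
      simpa [Setoid.bot_def] using h1'
    exact ⟨b, hac ▸ h2, (⊥ : Setoid X).refl' b⟩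

lemma mk2_ne_zero [Nonempty X] (θ : Setoid X) (k : X → X) (hk : Function.Involutive k)
    (hn : ∀ x, ¬ θ x (k x)) (hdi : ∀ x y, θ x y ∨ θ x (k y)) :
    FactZero X ≠ mk2 θ k hk hn hdi := by
  intro hcontra
  obtain ⟨x⟩ := ‹Nonempty X›
  have h2 : (⊥ : Setoid X) = pairS k hk := congrArg (fun p => p.1.2) hcontra
  have h3 : pairS k hk x (k x) := Or.inr rfl
  rw [← h2] at h3
  have h4 : k x = x := by
    have : x = k x := by simpa [Setoid.bot_def] using h3
    exact this.symm
  exact kx_ne hn x h4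

lemma mk2_isAtom [Nonempty X] (θ : Setoid X) (k : X → X) (hk : Function.Involutive k)
    (hn : ∀ x, ¬ θ x (k x)) (hdi : ∀ x y, θ x y ∨ θ x (k y)) :
    IsFactAtom (mk2 θ k hk hn hdi) := by
  constructor
  · exact ⟨factLE_zero _, mk2_ne_zero θ k hk hn hdi⟩
  · rintro ⟨⟨φ, φ'⟩, hfp⟩ hx ⟨⟨hle1, hle2, _⟩, hne⟩
    -- hle1 : θ ≤ φ, hle2 : φ' ≤ pairS k hk
    by_cases hall : ∀ p q, φ p q → θ p q
    · have hφ : φ = θ := le_antisymm (fun p q h => hall p q h) hle1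
      have hφ' : φ' = pairS k hk := by
        apply Setoid.ext
        intro a b
        constructor
        · exact fun h => hle2 h
        · intro hab
          rcases hab with h | h
          · rw [h]
          · rw [h]
            obtain ⟨z, hz1, hz2⟩ := hfp.2 a (k a)
            rcases (hle2 hz2 : pairS k hk z (k a)) with h' | h'
            · rw [hφ] at hz1
              rw [← h'] at hz1
              exact absurd hz1 (hn a)
            · have haz : a = z := hk.injective h'
              exact haz.symm ▸ hz2
      exact hne (Subtype.ext (Prod.ext hφ hφ'))
    · push_neg at hall
      obtain ⟨p, q, hpq, hnpq⟩ := hall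
      have hQ : θ q (k p) := by
        rcases hdi q p with h | h
        · exact absurd (θ.symm' h) hnpq
        · exact h
      have hconn : ∀ u, φ u p ∨ φ u q := by
        intro u
        rcases hdi u p with h | h
        · exact Or.inl (hle1 h)
        · exact Or.inr (hle1 (θ.trans' h (θ.symm' hQ)))
      have hall2 : ∀ u v, φ u v := by
        intro u v
        have h1 : φ u q := by
          rcases hconn u with h | h
          · exact φ.trans' h hpq
          · exact h
        have h2 : φ v q := by
          rcases hconn v with h | h
          · exact φ.trans' h hpq
          · exact h
        exact φ.trans' h1 (φ.symm' h2)
      have hbot : φ' = ⊥ := by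
        apply Setoid.ext
        intro a b
        constructor
        · intro h
          have := (hfp.1 a b).1 ⟨hall2 a b, h⟩
          simpa [Setoid.bot_def] using this
        · intro h
          have : a = b := by simpa [Setoid.bot_def] using h
          exact this ▸ φ'.refl' a
      have htop : φ = ⊤ := by
        apply Setoid.ext
        intro a b
        simp only [Setoid.top_def]
        exact ⟨fun _ => trivial, fun _ => hall2 a b⟩
      exact hx.2 (Subtype.ext (Prod.ext htop.symm hbot.symm))

lemma mk2_isNRel (θ : Setoid X) (k : X → X) (hk : Function.Involutive k)
    (hn : ∀ x, ¬ θ x (k x)) :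
    IsNRel 2 (pairS k hk) := by
  intro x
  have e : Bool ≃ {y // pairS k hk x y} := by
    refine Equiv.ofBijective (fun b => if b then ⟨k x, Or.inr rfl⟩ else ⟨x, Or.inl rfl⟩) ⟨?_, ?_⟩
    · intro a b hab
      cases a <;> cases b
      · rfl
      · exact absurd (show (x : X) = k x from congrArg Subtype.val hab)
          (fun hh => kx_ne hn x hh.symm)
      · exact absurd (show (k x : X) = x from congrArg Subtype.val hab) (kx_ne hn x)
      · rfl
    · rintro ⟨y, rfl | rfl⟩
      · exact ⟨false, rfl⟩
      · exact ⟨true, rfl⟩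
  rw [← Nat.card_congr e]
  simp [Nat.card_eq_fintype_card]

lemma mk2_is2Atom [Nonempty X] (θ : Setoid X) (k : X → X) (hk : Function.Involutive k)
    (hn : ∀ x, ¬ θ x (k x)) (hdi : ∀ x y, θ x y ∨ θ x (k y)) :
    Is2Atom (mk2 θ k hk hn hdi) :=
  ⟨mk2_isAtom θ k hk hn hdi, mk2_isNRel θ k hk hn⟩

/-! ### coordinates relative to a base matching -/

open scoped Classical

def kerS {A : Type*} (φ : X → A) : Setoid X :=
  ⟨fun a b => φ a = φ b, ⟨fun _ => rfl, Eq.symm, Eq.trans⟩⟩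

section Coord

variable (θ : Setoid X) (x₀ : X) (f : X → X)

/-- the `θ`-class of `x₀`. -/
abbrev Cls : Type _ := {x : X // θ x₀ x}

variable {θ x₀}

lemma not_mem_f {f : X → X} (hnf : ∀ x, ¬ θ x (f x)) {x : X} (h : θ x₀ x) :
    ¬ θ x₀ (f x) := fun hc => hnf x (θ.trans' (θ.symm' h) hc)

lemma mem_f_of_not {f : X → X} (hdf : ∀ x y, θ x y ∨ θ x (f y)) {x : X}
    (h : ¬ θ x₀ x) : θ x₀ (f x) := by
  rcases hdf x₀ x with h' | h'
  · exact absurd h' h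
  · exact h'

variable (θ x₀)

/-- the `Y`-coordinate of a point: itself or its partner, whichever lies in
the class of `x₀`. -/
noncomputable def ycrd (x : X) : Cls θ x₀ :=
  if h : θ x₀ x then ⟨x, h⟩ else
    if h' : θ x₀ (f x) then ⟨f x, h'⟩ else ⟨x₀, θ.refl' x₀⟩

/-- the matching obtained from the base matching `f` by twisting with a
permutation `σ` of the class of `x₀`. -/
noncomputable def kOf (σ : Equiv.Perm (Cls θ x₀)) (x : X) : X :=
  if h : θ x₀ x then f ((σ ⟨x, h⟩ : Cls θ x₀) : X) else
    if h' : θ x₀ (f x) then ((σ.symm ⟨f x, h'⟩ : Cls θ x₀) : X) else x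

variable {θ x₀ f}

lemma ycrd_pos {x : X} (h : θ x₀ x) : ycrd θ x₀ f x = ⟨x, h⟩ := dif_pos h

lemma ycrd_neg {x : X} (h : ¬ θ x₀ x) (h' : θ x₀ (f x)) :
    ycrd θ x₀ f x = ⟨f x, h'⟩ := by
  rw [ycrd, dif_neg h, dif_pos h']

lemma kOf_pos (σ : Equiv.Perm (Cls θ x₀)) {x : X} (h : θ x₀ x) :
    kOf θ x₀ f σ x = f ((σ ⟨x, h⟩ : Cls θ x₀) : X) := dif_pos h

lemma kOf_neg (σ : Equiv.Perm (Cls θ x₀)) {x : X} (h : ¬ θ x₀ x) (h' : θ x₀ (f x)) :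
    kOf θ x₀ f σ x = ((σ.symm ⟨f x, h'⟩ : Cls θ x₀) : X) := by
  rw [kOf, dif_neg h, dif_pos h']

section BaseProps

variable (hf : Function.Involutive f) (hnf : ∀ x, ¬ θ x (f x))
  (hdf : ∀ x y, θ x y ∨ θ x (f y))

lemma ycrd_coe' (y : Cls θ x₀) : ycrd θ x₀ f (y : X) = y := by
  rw [ycrd_pos y.2]

include hf hnf hdf

lemma ycrd_f (x : X) : ycrd θ x₀ f (f x) = ycrd θ x₀ f x := by
  by_cases h : θ x₀ x
  · have h1 : ¬ θ x₀ (f x) := not_mem_f hnf h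
    have h2 : θ x₀ (f (f x)) := by rw [hf x]; exact h
    rw [ycrd_pos h, ycrd_neg h1 h2]
    exact Subtype.ext (hf x)
  · have h' : θ x₀ (f x) := mem_f_of_not hdf h
    rw [ycrd_pos h', ycrd_neg h h']

lemma ycrd_fcoe (y : Cls θ x₀) : ycrd θ x₀ f (f (y : X)) = y := by
  rw [ycrd_f hf hnf hdf, ycrd_coe']

lemma side_f (x : X) : decide (θ x₀ (f x)) = ! decide (θ x₀ x) := by
  by_cases h : θ x₀ x
  · simp [h, not_mem_f hnf h]
  · simp [h, mem_f_of_not hdf h]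

/-- reconstruction of a point from its side and `Y`-coordinate. -/
lemma recon (x : X) :
    x = (if θ x₀ x then ((ycrd θ x₀ f x : Cls θ x₀) : X) else f ((ycrd θ x₀ f x : Cls θ x₀) : X)) := by
  by_cases h : θ x₀ x
  · rw [if_pos h, ycrd_pos h]
  · rw [if_neg h, ycrd_neg h (mem_f_of_not hdf h), hf x]

lemma kOf_involutive (σ : Equiv.Perm (Cls θ x₀)) :
    Function.Involutive (kOf θ x₀ f σ) := by
  intro x
  by_cases h : θ x₀ x
  · rw [kOf_pos σ h]
    have h1 : ¬ θ x₀ (f ((σ ⟨x, h⟩ : Cls θ x₀) : X)) := not_mem_f hnf (σ ⟨x, h⟩).2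
    have h2 : θ x₀ (f (f ((σ ⟨x, h⟩ : Cls θ x₀) : X))) := by
      rw [hf]; exact (σ ⟨x, h⟩).2
    rw [kOf_neg σ h1 h2]
    have h3 : (⟨f (f ((σ ⟨x, h⟩ : Cls θ x₀) : X)), h2⟩ : Cls θ x₀) = σ ⟨x, h⟩ :=
      Subtype.ext (hf _)
    rw [h3, Equiv.symm_apply_apply]
  · have h' : θ x₀ (f x) := mem_f_of_not hdf h
    rw [kOf_neg σ h h']
    have h1 : θ x₀ ((σ.symm ⟨f x, h'⟩ : Cls θ x₀) : X) := (σ.symm ⟨f x, h'⟩).2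
    rw [kOf_pos σ h1]
    have h3 : (⟨((σ.symm ⟨f x, h'⟩ : Cls θ x₀) : X), h1⟩ : Cls θ x₀) = σ.symm ⟨f x, h'⟩ :=
      Subtype.ext rfl
    rw [h3, Equiv.apply_symm_apply]
    exact hf x

lemma kOf_nrel (σ : Equiv.Perm (Cls θ x₀)) (x : X) : ¬ θ x (kOf θ x₀ f σ x) := by
  by_cases h : θ x₀ x
  · rw [kOf_pos σ h]
    intro hc
    have h1 : θ x₀ ((σ ⟨x, h⟩ : Cls θ x₀) : X) := (σ ⟨x, h⟩).2
    exact hnf _ (θ.trans' (θ.trans' (θ.symm' h1) h) hc)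
  · have h' : θ x₀ (f x) := mem_f_of_not hdf h
    rw [kOf_neg σ h h']
    intro hc
    exact h (θ.trans' (σ.symm ⟨f x, h'⟩).2 (θ.symm' hc))

lemma kOf_one : kOf θ x₀ f (1 : Equiv.Perm (Cls θ x₀)) = f := by
  funext x
  by_cases h : θ x₀ x
  · rw [kOf_pos 1 h]; rfl
  · rw [kOf_neg 1 h (mem_f_of_not hdf h)]; rfl

omit hf hnf in
lemma dich_transfer (k : X → X) (hkn : ∀ x, ¬ θ x (k x)) :
    ∀ x y, θ x y ∨ θ x (k y) := by
  intro x y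
  rcases hdf x y with h | h
  · exact Or.inl h
  · right
    have h1 : θ (k y) (f y) := by
      rcases hdf (k y) y with h2 | h2
      · exact absurd (θ.symm' h2) (hkn y)
      · exact h2
    exact θ.trans' h (θ.symm' h1)

lemma kOf_kOf (δ σ : Equiv.Perm (Cls θ x₀)) :
    kOf θ x₀ (kOf θ x₀ f δ) σ = kOf θ x₀ f (δ * σ) := by
  funext x
  by_cases h : θ x₀ x
  · rw [kOf_pos (f := kOf θ x₀ f δ) σ h, kOf_pos (δ * σ) h]
    rw [kOf_pos δ (σ ⟨x, h⟩).2]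
    rfl
  · have h' : θ x₀ (f x) := mem_f_of_not hdf h
    have hFx : kOf θ x₀ f δ x = ((δ.symm ⟨f x, h'⟩ : Cls θ x₀) : X) := kOf_neg δ h h'
    have h'' : θ x₀ (kOf θ x₀ f δ x) := by rw [hFx]; exact (δ.symm ⟨f x, h'⟩).2
    rw [kOf_neg (f := kOf θ x₀ f δ) σ h h'', kOf_neg (δ * σ) h h']
    have h3 : (⟨kOf θ x₀ f δ x, h''⟩ : Cls θ x₀) = δ.symm ⟨f x, h'⟩ := Subtype.ext hFx
    rw [h3]
    rfl

end BaseProps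

end Coord

/-! ### the 8-class common upper bound and the basic `Sim2` step -/

section StepSection

variable (θ : Setoid X) (x₀ : X) (f : X → X) {W : Type u} (m : Cls θ x₀ ≃ (Fin 4) × W)

/-- the label of a point : its side together with the `Fin 4` label of its
`Y`-coordinate. -/
noncomputable def labf (x : X) : Bool × Fin 4 :=
  (decide (θ x₀ x), (m (ycrd θ x₀ f x)).1)

/-- the `W`-coordinate of a point. -/
noncomputable def wcf (x : X) : W := (m (ycrd θ x₀ f x)).2

variable {θ x₀ f}
variable (hf : Function.Involutive f) (hnf : ∀ x, ¬ θ x (f x))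
  (hdf : ∀ x y, θ x y ∨ θ x (f y))

include hf hnf hdf

lemma theta_of_lab {x y : X} (h : labf θ x₀ f m x = labf θ x₀ f m y) : θ x y := by
  have hs : θ x₀ x ↔ θ x₀ y := decide_eq_decide.mp (congrArg Prod.fst h)
  by_cases hx : θ x₀ x
  · exact θ.trans' (θ.symm' hx) (hs.mp hx)
  · rcases hdf x y with h2 | h2
    · exact h2
    · exact absurd (θ.trans' (mem_f_of_not hdf (fun hy => hx (hs.mpr hy)))
        (θ.symm' h2)) hx

lemma exists_fiber (s : Bool) (j : Fin 4) (w : W) :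
    ∃ z, labf θ x₀ f m z = (s, j) ∧ wcf θ x₀ f m z = w := by
  cases s
  · refine ⟨f ((m.symm (j, w) : Cls θ x₀) : X), ?_, ?_⟩
    · have h1 : ¬ θ x₀ (f ((m.symm (j, w) : Cls θ x₀) : X)) :=
        not_mem_f hnf (m.symm (j, w)).2
      simp only [labf, ycrd_fcoe hf hnf hdf, Equiv.apply_symm_apply]
      simp [h1]
    · simp only [wcf, ycrd_fcoe hf hnf hdf, Equiv.apply_symm_apply]
  · refine ⟨((m.symm (j, w) : Cls θ x₀) : X), ?_, ?_⟩
    · have h1 : θ x₀ ((m.symm (j, w) : Cls θ x₀) : X) := (m.symm (j, w)).2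
      simp only [labf, ycrd_coe', Equiv.apply_symm_apply]
      simp [h1]
    · simp only [wcf, ycrd_coe', Equiv.apply_symm_apply]

/-- the common upper bound: an 8-class factor pair. -/
noncomputable def gFact : FactPair X :=
  ⟨(kerS (labf θ x₀ f m), kerS (wcf θ x₀ f m)), by
    constructor
    · intro x y
      constructor
      · rintro ⟨h1, h2⟩
        have hy : ycrd θ x₀ f x = ycrd θ x₀ f y :=
          m.injective (Prod.ext (congrArg Prod.snd h1) h2)
        have hs : θ x₀ x ↔ θ x₀ y := decide_eq_decide.mp (congrArg Prod.fst h1)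
        by_cases hx : θ x₀ x
        · calc x = ((ycrd θ x₀ f x : Cls θ x₀) : X) := by rw [ycrd_pos hx]
            _ = ((ycrd θ x₀ f y : Cls θ x₀) : X) := by rw [hy]
            _ = y := by rw [ycrd_pos (hs.mp hx)]
        · have hx' : ¬ θ x₀ y := fun hy' => hx (hs.mpr hy')
          calc x = f ((ycrd θ x₀ f x : Cls θ x₀) : X) := by
                rw [ycrd_neg hx (mem_f_of_not hdf hx)]
                exact (hf x).symm
            _ = f ((ycrd θ x₀ f y : Cls θ x₀) : X) := by rw [hy]
            _ = y := by
                rw [ycrd_neg hx' (mem_f_of_not hdf hx')]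
                exact hf y
      · rintro rfl
        exact ⟨rfl, rfl⟩
    · intro x y
      obtain ⟨z, hz1, hz2⟩ := exists_fiber m hf hnf hdf (labf θ x₀ f m x).1
        (labf θ x₀ f m x).2 (wcf θ x₀ f m y)
      exact ⟨z, show labf θ x₀ f m x = labf θ x₀ f m z from (hz1.trans Prod.mk.eta).symm,
        hz2⟩⟩

lemma gFact_card :
    Nat.card (Quotient (gFact m hf hnf hdf).1.1) = 8 := by
  show Nat.card (Quotient (kerS (labf θ x₀ f m))) = 8
  have hresp : ∀ a b : X, kerS (labf θ x₀ f m) a b → labf θ x₀ f m a = labf θ x₀ f m b :=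
    fun _ _ h => h
  have hbij : Function.Bijective
      (Quotient.lift (labf θ x₀ f m) hresp :
        Quotient (kerS (labf θ x₀ f m)) → Bool × Fin 4) := by
    constructor
    · intro q1 q2
      induction q1 using Quotient.ind
      induction q2 using Quotient.ind
      exact fun h => Quotient.sound h
    · rintro ⟨s, j⟩
      obtain ⟨z, hz1, _⟩ := exists_fiber m hf hnf hdf s j ((m ⟨x₀, θ.refl' x₀⟩).2)
      exact ⟨Quotient.mk _ z, hz1⟩
  rw [Nat.card_congr (Equiv.ofBijective _ hbij)]
  simp [Nat.card_eq_fintype_card]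

lemma le_gFact (k : X → X) (hki : Function.Involutive k) (hkn : ∀ x, ¬ θ x (k x))
    (hkd : ∀ x y, θ x y ∨ θ x (k y))
    (hC1 : ∀ x, wcf θ x₀ f m (k x) = wcf θ x₀ f m x)
    (P : Bool × Fin 4 → Bool × Fin 4)
    (hC2 : ∀ x, labf θ x₀ f m (k x) = P (labf θ x₀ f m x)) :
    FactLE (mk2 θ k hki hkn hkd) (gFact m hf hnf hdf) := by
  have key : ∀ a b : X, labf θ x₀ f m (k a) = labf θ x₀ f m b →
      labf θ x₀ f m a = labf θ x₀ f m (k b) := by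
    intro a b h
    have h2 : labf θ x₀ f m (k b) = labf θ x₀ f m (k (k a)) := by
      rw [hC2 b, hC2 (k a), h]
    rw [h2, hki a]
  refine ⟨?_, ?_, ?_⟩
  · exact fun x y h => theta_of_lab m hf hnf hdf h
  · rintro x y (rfl | rfl)
    · rfl
    · exact (hC1 x).symm
  · funext a b
    apply propext
    constructor
    · rintro ⟨z, hz1, rfl | rfl⟩
      · exact ⟨a, Or.inl rfl, hz1⟩
      · refine ⟨k a, Or.inr rfl, ?_⟩
        show labf θ x₀ f m (k a) = labf θ x₀ f m (k z)
        rw [hC2 a, hC2 z, hz1]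
    · rintro ⟨z, rfl | rfl, hz2⟩
      · exact ⟨b, hz2, Or.inl rfl⟩
      · exact ⟨k b, key a b hz2, Or.inr (hki b).symm⟩

lemma C1_base (x : X) : wcf θ x₀ f m (f x) = wcf θ x₀ f m x := by
  simp only [wcf, ycrd_f hf hnf hdf]

lemma C2_base (x : X) :
    labf θ x₀ f m (f x) = (fun p : Bool × Fin 4 => (!p.1, p.2)) (labf θ x₀ f m x) := by
  simp only [labf, ycrd_f hf hnf hdf, side_f hf hnf hdf]

section Pattern

variable (σ : Equiv.Perm (Cls θ x₀)) (π : Equiv.Perm (Fin 4))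
  (hm : ∀ y, m (σ y) = (π (m y).1, (m y).2))

omit hf hnf hdf in
include hm in
lemma hm_symm (y : Cls θ x₀) :
    m (σ.symm y) = (π.symm (m y).1, (m y).2) := by
  have h0 := hm (σ.symm y)
  rw [Equiv.apply_symm_apply] at h0
  have h1 : (m (σ.symm y)).2 = (m y).2 := (congrArg Prod.snd h0).symm
  have h2 : π (m (σ.symm y)).1 = (m y).1 := (congrArg Prod.fst h0).symm
  refine Prod.ext ?_ h1
  rw [← h2, Equiv.symm_apply_apply]

include hm in
lemma C1_kOf (x : X) :
    wcf θ x₀ f m (kOf θ x₀ f σ x) = wcf θ x₀ f m x := by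
  by_cases h : θ x₀ x
  · rw [kOf_pos σ h]
    simp only [wcf, ycrd_fcoe hf hnf hdf, ycrd_pos h, hm]
  · have h' : θ x₀ (f x) := mem_f_of_not hdf h
    rw [kOf_neg σ h h']
    simp only [wcf, ycrd_coe', ycrd_neg h h', hm_symm m σ π hm]

include hm in
lemma C2_kOf (x : X) :
    labf θ x₀ f m (kOf θ x₀ f σ x) =
      (fun p : Bool × Fin 4 => if p.1 then (false, π p.2) else (true, π.symm p.2))
        (labf θ x₀ f m x) := by
  by_cases h : θ x₀ x
  · rw [kOf_pos σ h]
    have h1 : ¬ θ x₀ (f ((σ ⟨x, h⟩ : Cls θ x₀) : X)) := not_mem_f hnf (σ ⟨x, h⟩).2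
    have e1 : labf θ x₀ f m (f ((σ ⟨x, h⟩ : Cls θ x₀) : X)) =
        (false, π (m ⟨x, h⟩).1) := by
      simp only [labf, ycrd_fcoe hf hnf hdf, hm]
      simp [h1]
    have e2 : labf θ x₀ f m x = (true, (m ⟨x, h⟩).1) := by
      simp only [labf, ycrd_pos h]
      simp [h]
    rw [e1, e2]
    simp
  · have h' : θ x₀ (f x) := mem_f_of_not hdf h
    rw [kOf_neg σ h h']
    have h1 : θ x₀ ((σ.symm ⟨f x, h'⟩ : Cls θ x₀) : X) := (σ.symm ⟨f x, h'⟩).2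
    have e1 : labf θ x₀ f m ((σ.symm ⟨f x, h'⟩ : Cls θ x₀) : X) =
        (true, π.symm (m ⟨f x, h'⟩).1) := by
      simp only [labf, ycrd_coe', hm_symm m σ π hm]
      simp [h1]
    have e2 : labf θ x₀ f m x = (false, (m ⟨f x, h'⟩).1) := by
      simp only [labf, ycrd_neg h h']
      simp [h]
    rw [e1, e2]
    simp

include hm in
/-- the basic step: twisting a base matching by a patterned permutation moves
between `Sim2`-related `2`-atoms. -/
lemma step_sim2 :
    Sim2 (mk2 θ f hf hnf hdf)
      (mk2 θ (kOf θ x₀ f σ) (kOf_involutive hf hnf hdf σ) (kOf_nrel hf hnf hdf σ)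
        (dich_transfer hdf _ (kOf_nrel hf hnf hdf σ))) := by
  haveI : Nonempty X := ⟨x₀⟩
  refine ⟨mk2_is2Atom _ _ _ _ _, mk2_is2Atom _ _ _ _ _, rfl,
    gFact m hf hnf hdf, gFact_card m hf hnf hdf, ?_, ?_⟩
  · exact le_gFact m hf hnf hdf f hf hnf hdf (C1_base m hf hnf hdf)
      (fun p : Bool × Fin 4 => (!p.1, p.2)) (C2_base m hf hnf hdf)
  · exact le_gFact m hf hnf hdf _ _ _ _ (C1_kOf m hf hnf hdf σ π hm)
      (fun p : Bool × Fin 4 => if p.1 then (false, π p.2) else (true, π.symm p.2))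
      (C2_kOf m hf hnf hdf σ π hm)

end Pattern

end StepSection

/-! ### extraction of the matching from a `2`-atom, and the main theorem -/

lemma extract (a : FactPair X) (h2 : IsNRel 2 a.1.2) :
    ∃ (k : X → X) (hk : Function.Involutive k) (hn : ∀ x, ¬ a.1.1 x (k x))
      (hdi : ∀ x y, a.1.1 x y ∨ a.1.1 x (k y)), a = mk2 a.1.1 k hk hn hdi := by
  classical
  have key : ∀ x : X, ∃ y, a.1.2 x y ∧ y ≠ x ∧ ∀ z, a.1.2 x z → z = x ∨ z = y := by
    intro x
    have hcard := h2 x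
    rw [Nat.card_eq_two_iff] at hcard
    obtain ⟨u, v, huv, hcov⟩ := hcard
    have hall : ∀ z : {y // a.1.2 x y}, z = u ∨ z = v := by
      intro z
      have : z ∈ ({u, v} : Set {y // a.1.2 x y}) := by rw [hcov]; trivial
      simpa using this
    rcases hall ⟨x, a.1.2.refl' x⟩ with hx | hx
    · refine ⟨(v : X), v.2, ?_, ?_⟩
      · intro hc
        exact huv (Subtype.ext (by rw [← hx]; exact hc.symm))
      · intro z hz
        rcases hall ⟨z, hz⟩ with h | h
        · exact Or.inl (by rw [← hx] at h; exact congrArg Subtype.val h)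
        · exact Or.inr (congrArg Subtype.val h)
    · refine ⟨(u : X), u.2, ?_, ?_⟩
      · intro hc
        exact huv (Subtype.ext (by rw [← hx]; exact hc))
      · intro z hz
        rcases hall ⟨z, hz⟩ with h | h
        · exact Or.inr (congrArg Subtype.val h)
        · exact Or.inl (by rw [← hx] at h; exact congrArg Subtype.val h)
  choose k hk1 hk2 hk3 using key
  have hkinv : Function.Involutive k := by
    intro x
    rcases hk3 (k x) x (a.1.2.symm' (hk1 x)) with h | h
    · exact absurd h.symm (hk2 x)
    · exact h.symm
  have hn : ∀ x, ¬ a.1.1 x (k x) := fun x hc =>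
    hk2 x ((a.2.1 x (k x)).1 ⟨hc, hk1 x⟩).symm
  have hdi : ∀ x y, a.1.1 x y ∨ a.1.1 x (k y) := by
    intro x y
    obtain ⟨z, hz1, hz2⟩ := a.2.2 x y
    rcases hk3 z y hz2 with h | h
    · exact Or.inl (h ▸ hz1)
    · right
      have : k y = z := by rw [h, hkinv]
      exact this ▸ hz1
  refine ⟨k, hkinv, hn, hdi, ?_⟩
  apply Subtype.ext
  refine Prod.ext rfl ?_
  apply Setoid.ext
  intro p q
  constructor
  · intro h
    exact hk3 p q h
  · rintro (rfl | h)
    · exact a.1.2.refl' _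
    · rw [h]; exact hk1 p
  
lemma infinite_cls [Infinite X] {θ : Setoid X} {x₀ : X} {f : X → X}
    (hf : Function.Involutive f) (hnf : ∀ x, ¬ θ x (f x))
    (hdf : ∀ x y, θ x y ∨ θ x (f y)) : Infinite (Cls θ x₀) := by
  rcases finite_or_infinite (Cls θ x₀) with hfin | hinf
  · haveI := hfin
    have hsurj : Function.Surjective
        (fun p : Bool × Cls θ x₀ => if p.1 then (p.2 : X) else f (p.2 : X)) := by
      intro x
      by_cases h : θ x₀ x
      · exact ⟨(true, ⟨x, h⟩), rfl⟩
      · refine ⟨(false, ⟨f x, mem_f_of_not hdf h⟩), ?_⟩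
        simpa using hf x
    haveI : Finite X := Finite.of_surjective _ hsurj
    exact (not_finite X).elim
  · exact hinf

/-- equal matchings give equal factor pairs. -/
lemma mk2_congr {θ : Setoid X} {k k' : X → X} (hkk : k = k')
    (hk : Function.Involutive k) (hn : ∀ x, ¬ θ x (k x))
    (hdi : ∀ x y, θ x y ∨ θ x (k y))
    (hk' : Function.Involutive k') (hn' : ∀ x, ¬ θ x (k' x))
    (hdi' : ∀ x y, θ x y ∨ θ x (k' y)) :
    mk2 θ k hk hn hdi = mk2 θ k' hk' hn' hdi' := by
  subst hkk
  rfl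

end TwoAtomsAux

open TwoAtomsAux in
/-- Two `2`-atoms of `Fact X` (for `X` infinite) with the same first coordinate are
related by `≈₂`, the transitive closure of `∼₂`. -/
theorem two_atoms_approx2 (X : Type*) [Infinite X] (a b : FactPair X)
    (ha : Is2Atom a) (hb : Is2Atom b) (hfst : a.1.1 = b.1.1) :
    Relation.TransGen Sim2 a b := by
  classical
  obtain ⟨x₀⟩ : Nonempty X := inferInstance
  obtain ⟨f, hfI, hfn, hfd, haeq⟩ := extract a ha.2
  obtain ⟨hfun, hhI, hhn0, hhd0, hbeq⟩ := extract b hb.2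
  have hb2 : b.1.2 = pairS hfun hhI := congrArg (fun t => t.1.2) hbeq
  have hhn : ∀ x, ¬ a.1.1 x (hfun x) := by rw [hfst]; exact hhn0
  have hhd : ∀ x y, a.1.1 x y ∨ a.1.1 x (hfun y) := by rw [hfst]; exact hhd0
  have hbeq' : b = mk2 a.1.1 hfun hhI hhn hhd := Subtype.ext (Prod.ext hfst.symm hb2)
  haveI : Infinite (Cls a.1.1 x₀) := infinite_cls hfI hfn hfd
  -- the ratio permutation
  have hmem1 : ∀ y : Cls a.1.1 x₀, a.1.1 x₀ (f (hfun (y : X))) := by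
    intro y
    have h1 : ¬ a.1.1 x₀ (hfun (y : X)) :=
      fun hc => hhn (y : X) (a.1.1.trans' (a.1.1.symm' y.2) hc)
    exact mem_f_of_not hfd h1
  have hmem2 : ∀ y : Cls a.1.1 x₀, a.1.1 x₀ (hfun (f (y : X))) := by
    intro y
    rcases hhd x₀ (f (y : X)) with h | h
    · exact absurd h (not_mem_f hfn y.2)
    · exact h
  let β : Equiv.Perm (Cls a.1.1 x₀) :=
    { toFun := fun y => ⟨f (hfun (y : X)), hmem1 y⟩
      invFun := fun y => ⟨hfun (f (y : X)), hmem2 y⟩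
      left_inv := fun y => Subtype.ext (by
        show hfun (f (f (hfun (y : X)))) = (y : X)
        rw [hfI, hhI])
      right_inv := fun y => Subtype.ext (by
        show f (hfun (hfun (f (y : X)))) = (y : X)
        rw [hhI, hfI]) }
  have hkβ : kOf a.1.1 x₀ f β = hfun := by
    funext x
    by_cases h : a.1.1 x₀ x
    · rw [kOf_pos β h]
      show f (f (hfun x)) = hfun x
      rw [hfI]
    · have h' := mem_f_of_not hfd h
      rw [kOf_neg β h h']
      show hfun (f (f x)) = hfun x
      rw [hfI]
  obtain ⟨s₁, s₂, s₃, s₄, p1, p2, p3, p4, hfac⟩ := factor_four β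
  obtain ⟨W1, m1, π1, hm1⟩ := p1
  obtain ⟨W2, m2, π2, hm2⟩ := p2
  obtain ⟨W3, m3, π3, hm3⟩ := p3
  obtain ⟨W4, m4, π4, hm4⟩ := p4
  -- hypotheses along the chain
  have h1I := kOf_involutive hfI hfn hfd s₁
  have h1n := kOf_nrel hfI hfn hfd s₁
  have h1d := dich_transfer hfd _ h1n
  have h2I := kOf_involutive hfI hfn hfd (s₁ * s₂)
  have h2n := kOf_nrel hfI hfn hfd (s₁ * s₂)
  have h2d := dich_transfer hfd _ h2n
  have h3I := kOf_involutive hfI hfn hfd (s₁ * s₂ * s₃)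
  have h3n := kOf_nrel hfI hfn hfd (s₁ * s₂ * s₃)
  have h3d := dich_transfer hfd _ h3n
  have h4I := kOf_involutive hfI hfn hfd (s₁ * s₂ * s₃ * s₄)
  have h4n := kOf_nrel hfI hfn hfd (s₁ * s₂ * s₃ * s₄)
  have h4d := dich_transfer hfd _ h4n
  have hk4 : kOf a.1.1 x₀ f (s₁ * s₂ * s₃ * s₄) = hfun := by
    rw [← hfac]; exact hkβ
  -- the four steps
  have t1 : Sim2 a (mk2 a.1.1 (kOf a.1.1 x₀ f s₁) h1I h1n h1d) := by
    have h := step_sim2 m1 hfI hfn hfd s₁ π1 hm1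
    rwa [← haeq] at h
  have t2 : Sim2 (mk2 a.1.1 (kOf a.1.1 x₀ f s₁) h1I h1n h1d)
      (mk2 a.1.1 (kOf a.1.1 x₀ f (s₁ * s₂)) h2I h2n h2d) := by
    have h := step_sim2 m2 h1I h1n h1d s₂ π2 hm2
    rwa [mk2_congr (kOf_kOf hfI hfn hfd s₁ s₂) (kOf_involutive h1I h1n h1d s₂)
      (kOf_nrel h1I h1n h1d s₂) (dich_transfer h1d _ (kOf_nrel h1I h1n h1d s₂))
      h2I h2n h2d] at h
  have t3 : Sim2 (mk2 a.1.1 (kOf a.1.1 x₀ f (s₁ * s₂)) h2I h2n h2d)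
      (mk2 a.1.1 (kOf a.1.1 x₀ f (s₁ * s₂ * s₃)) h3I h3n h3d) := by
    have h := step_sim2 m3 h2I h2n h2d s₃ π3 hm3
    rwa [mk2_congr (kOf_kOf hfI hfn hfd (s₁ * s₂) s₃) (kOf_involutive h2I h2n h2d s₃)
      (kOf_nrel h2I h2n h2d s₃) (dich_transfer h2d _ (kOf_nrel h2I h2n h2d s₃))
      h3I h3n h3d] at h
  have t4 : Sim2 (mk2 a.1.1 (kOf a.1.1 x₀ f (s₁ * s₂ * s₃)) h3I h3n h3d) b := by
    have h := step_sim2 m4 h3I h3n h3d s₄ π4 hm4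
    rw [mk2_congr (kOf_kOf hfI hfn hfd (s₁ * s₂ * s₃) s₄) (kOf_involutive h3I h3n h3d s₄)
      (kOf_nrel h3I h3n h3d s₄) (dich_transfer h3d _ (kOf_nrel h3I h3n h3d s₄))
      h4I h4n h4d] at h
    rw [mk2_congr hk4 h4I h4n h4d hhI hhn hhd] at h
    rwa [← hbeq'] at h
  exact Relation.TransGen.head t1 (Relation.TransGen.head t2
    (Relation.TransGen.head t3 (Relation.TransGen.single t4)))
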